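/- For all vectors u1, u2, u3 in R^m it holds that 4·((3/2)u3 - 2u2 + (1/2)u1, u3) = |u3|^2 - |u2|^2 + |2u3 - u2|^2 - |2u2 - u1|^2 + |u3 - 2u2 + u1|^2. -/

import Mathlib

theorem emmrich_identity_two_step (m : ℕ) (hm : 0 < m)
    (u1 u2 u3 : EuclideanSpace ℝ (Fin m)) :
    4 * (inner ℝ ((3 / 2 : ℝ) • u3 - (2 : ℝ) • u2 + (1 / 2 : ℝ) • u1) u3 : ℝ) =
      ‖u3‖ ^ 2 - ‖u2‖ ^ 2 + ‖(2 : ℝ) • u3 - u2‖ ^ 2 - ‖(2 : ℝ) • u2 - u1‖ ^ 2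
        + ‖u3 - (2 : ℝ) • u2 + u1‖ ^ 2 := by
  simp only [← real_inner_self_eq_norm_sq, inner_sub_sub_self, inner_add_add_self,
    inner_sub_left, inner_sub_right, inner_add_left, inner_add_right,
    inner_smul_left, inner_smul_right, real_inner_comm u2 u3, real_inner_comm u1 u2,
    real_inner_comm u1 u3, RCLike.ofReal_real_eq_id, id, starRingEnd_apply, star_trivial]
  ring
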